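/- Let v ∈ ℤⁿ with v ≢ 0 (mod m) for a positive integer m, and let w be the shortest m-representative of v. If v admits a perfect m-representative, then wᵀw ≤ m² and |eᵀw − m| ≤ 3m. -/

import Mathlib

set_option maxHeartbeats 1000000 in

theorem stmt8 (n : ℕ) (m : ℕ) (hm : 0 < m) (v w : Fin n → ℤ)
    (hv : ∃ i, ¬ ((m : ℤ) ∣ v i))
    -- w is the shortest m-representative of v
    (hw_cong : ∀ i, w i ≡ v i [ZMOD (m : ℤ)])
    (hw_short : ∀ i, -(m : ℤ) < 2 * w i ∧ 2 * w i ≤ (m : ℤ))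
    -- v admits a perfect m-representative
    (hperf : ∃ x : Fin n → ℤ, (∀ i, x i ≡ v i [ZMOD (m : ℤ)]) ∧
        (∑ i, x i = (m : ℤ)) ∧ (∑ i, x i * x i = (m : ℤ) ^ 2)) :
    (∑ i, w i * w i ≤ (m : ℤ) ^ 2) ∧ |(∑ i, w i) - (m : ℤ)| ≤ 3 * (m : ℤ) := by
  obtain ⟨x, hxc, hxs, hxsq⟩ := hperf
  have hM0 : (0:ℤ) < (m:ℤ) := by exact_mod_cast hm
  have hd : ∀ i, ∃ c : ℤ, x i - w i = (m:ℤ) * c := by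
    intro i
    have h1 : w i ≡ x i [ZMOD (m:ℤ)] := (hw_cong i).trans (hxc i).symm
    exact h1.dvd
  choose k hk using hd
  -- each square is at most m^2
  have hxb : ∀ i, x i * x i ≤ (m:ℤ)^2 := by
    intro i
    rw [← hxsq]
    exact Finset.single_le_sum (fun j _ => mul_self_nonneg (x j)) (Finset.mem_univ i)
  have hxabs : ∀ i, -(m:ℤ) ≤ x i ∧ x i ≤ (m:ℤ) := by
    intro i
    have := hxb i
    constructor <;> nlinarith
  -- k i ∈ {-1, 0, 1}
  have hk1 : ∀ i, k i = -1 ∨ k i = 0 ∨ k i = 1 := by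
    intro i
    have h1 := hw_short i
    have h2 := hxabs i
    have h3 := hk i
    by_contra hcon
    push_neg at hcon
    have : k i ≤ -2 ∨ 2 ≤ k i := by omega
    rcases this with h | h <;> nlinarith
  -- part 1 pointwise
  have hpt : ∀ i, w i * w i ≤ x i * x i := by
    intro i
    have h1 := hw_short i
    have h3 := hk i
    rcases hk1 i with h | h | h <;> rw [h] at h3 <;> nlinarith
  have part1 : ∑ i, w i * w i ≤ (m:ℤ)^2 := by
    rw [← hxsq]; exact Finset.sum_le_sum fun i _ => hpt i
  refine ⟨part1, ?_⟩
  -- sum relation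
  have hws : ∑ i, w i = (m:ℤ) - (m:ℤ) * ∑ i, k i := by
    have : ∑ i, w i = ∑ i, (x i - (m:ℤ) * k i) := by
      refine Finset.sum_congr rfl fun i _ => ?_
      have := hk i; linarith
    rw [this, Finset.sum_sub_distrib, hxs, ← Finset.mul_sum]
  set K : ℤ := ∑ i, k i with hK
  -- upper bound: K ≤ 3
  have hKub : K ≤ 3 := by
    set P := Finset.univ.filter (fun i => k i = 1) with hP
    have hKP : K ≤ (P.card : ℤ) := by
      have hsplit := Finset.sum_filter_add_sum_filter_not Finset.univ (fun i => k i = 1) k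
      have h1 : ∑ i ∈ P, k i = (P.card : ℤ) := by
        rw [Finset.sum_congr rfl (fun i hi => (Finset.mem_filter.mp hi).2)]
        simp
        rfl
      have h2 : ∑ i ∈ Finset.univ.filter (fun i => ¬ k i = 1), k i ≤ 0 := by
        apply Finset.sum_nonpos
        intro i hi
        have := (Finset.mem_filter.mp hi).2
        rcases hk1 i with h | h | h <;> omega
      rw [hK, ← hsplit, h1]
      linarith
    have hPle : ∀ i ∈ P, ((m:ℤ)+1)^2 ≤ 4 * (x i * x i) := by
      intro i hi
      have hki : k i = 1 := (Finset.mem_filter.mp hi).2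
      have h1 := hw_short i
      have h3 := hk i
      rw [hki] at h3
      have h2x : (m:ℤ) + 1 ≤ 2 * x i := by linarith
      nlinarith
    have hsum : (P.card : ℤ) * ((m:ℤ)+1)^2 ≤ 4 * (m:ℤ)^2 := by
      have h1 : P.card • (((m:ℤ)+1)^2) ≤ ∑ i ∈ P, 4 * (x i * x i) :=
        Finset.card_nsmul_le_sum P _ _ hPle
      rw [nsmul_eq_mul] at h1
      have h2 : ∑ i ∈ P, 4 * (x i * x i) ≤ ∑ i, 4 * (x i * x i) :=
        Finset.sum_le_sum_of_subset_of_nonneg (Finset.subset_univ P)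
          (fun i _ _ => by nlinarith [mul_self_nonneg (x i)])
      have h3 : ∑ i, 4 * (x i * x i) = 4 * (m:ℤ)^2 := by
        rw [← Finset.mul_sum, hxsq]
      linarith
    by_contra hcon
    push_neg at hcon
    have h4 : (4:ℤ) ≤ (P.card : ℤ) := by omega
    nlinarith
  -- lower bound: -3 ≤ K
  have hKlb : -3 ≤ K := by
    by_contra hcon
    push_neg at hcon
    have hK4 : K ≤ -4 := by omega
    set Q := Finset.univ.filter (fun i => k i = -1) with hQ
    have hsplit := Finset.sum_filter_add_sum_filter_not Finset.univ (fun i => k i = -1) k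
    have h1 : ∑ i ∈ Q, k i = -(Q.card : ℤ) := by
      rw [Finset.sum_congr rfl (fun i hi => (Finset.mem_filter.mp hi).2)]
      simp
      rfl
    have h2 : 0 ≤ ∑ i ∈ Finset.univ.filter (fun i => ¬ k i = -1), k i := by
      apply Finset.sum_nonneg
      intro i hi
      have := (Finset.mem_filter.mp hi).2
      rcases hk1 i with h | h | h <;> omega
    have hQ4 : (4:ℤ) ≤ (Q.card : ℤ) := by
      have : -(Q.card:ℤ) ≤ K := by rw [hK, ← hsplit, h1]; linarith
      linarith
    have hQle : ∀ i ∈ Q, (m:ℤ)^2 ≤ 4 * (x i * x i) ∧ 2 * x i ≤ -(m:ℤ) := by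
      intro i hi
      have hki : k i = -1 := (Finset.mem_filter.mp hi).2
      have hw1 := hw_short i
      have h3 := hk i
      rw [hki] at h3
      have h2x : 2 * x i ≤ -(m:ℤ) := by linarith
      constructor
      · nlinarith
      · exact h2x
    -- sum of squares over Q at least Q.card * m^2 ≥ 4 m^2, so the rest vanish
    have hQsq : (Q.card : ℤ) * (m:ℤ)^2 ≤ ∑ i ∈ Q, 4 * (x i * x i) := by
      have h1 : Q.card • ((m:ℤ)^2) ≤ ∑ i ∈ Q, 4 * (x i * x i) :=
        Finset.card_nsmul_le_sum Q _ _ (fun i hi => (hQle i hi).1)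
      rwa [nsmul_eq_mul] at h1
    have hsplitsq := Finset.sum_filter_add_sum_filter_not Finset.univ
      (fun i => k i = -1) (fun i => 4 * (x i * x i))
    have htot : ∑ i, 4 * (x i * x i) = 4 * (m:ℤ)^2 := by
      rw [← Finset.mul_sum, hxsq]
    have hrest : ∑ i ∈ Finset.univ.filter (fun i => ¬ k i = -1), 4 * (x i * x i) ≤ 0 := by
      have : (∑ i ∈ Q, 4 * (x i * x i)) +
          (∑ i ∈ Finset.univ.filter (fun i => ¬ k i = -1), 4 * (x i * x i)) = 4 * (m:ℤ)^2 := by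
        rw [hsplitsq, htot]
      nlinarith
    have hrest0 : ∀ i ∈ Finset.univ.filter (fun i => ¬ k i = -1), x i = 0 := by
      intro i hi
      have hnn : ∀ j ∈ Finset.univ.filter (fun i => ¬ k i = -1),
          (0:ℤ) ≤ 4 * (x j * x j) := fun j _ => by nlinarith [mul_self_nonneg (x j)]
      have heq : ∑ i ∈ Finset.univ.filter (fun i => ¬ k i = -1), 4 * (x i * x i) = 0 :=
        le_antisymm hrest (Finset.sum_nonneg hnn)
      have := (Finset.sum_eq_zero_iff_of_nonneg hnn).mp heq i hi
      nlinarith [mul_self_nonneg (x i)]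
    -- now the linear sum gives a contradiction
    have hx2 : ∑ i ∈ Q, 2 * x i ≤ Q.card • (-(m:ℤ)) :=
      Finset.sum_le_card_nsmul Q _ _ (fun i hi => (hQle i hi).2)
    rw [nsmul_eq_mul] at hx2
    have hxrest : ∑ i ∈ Finset.univ.filter (fun i => ¬ k i = -1), 2 * x i = 0 :=
      Finset.sum_eq_zero (fun i hi => by rw [hrest0 i hi]; ring)
    have hsplitx := Finset.sum_filter_add_sum_filter_not Finset.univ
      (fun i => k i = -1) (fun i => 2 * x i)
    have htotx : ∑ i, 2 * x i = 2 * (m:ℤ) := by rw [← Finset.mul_sum, hxs]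
    rw [hxrest, htotx, add_zero] at hsplitx
    nlinarith
  -- conclude
  rw [hws]
  have : (m:ℤ) - (m:ℤ) * K - (m:ℤ) = -((m:ℤ) * K) := by ring
  rw [this, abs_le]
  have h1 : (m:ℤ) * K ≤ (m:ℤ) * 3 := mul_le_mul_of_nonneg_left hKub (le_of_lt hM0)
  have h2 : (m:ℤ) * (-3) ≤ (m:ℤ) * K := mul_le_mul_of_nonneg_left hKlb (le_of_lt hM0)
  constructor <;> linarith
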